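/- Let X be an M-set, let A, B ⊆ ω be co-infinite sets, and let x ∈ X be supported on both A and B. Then x is supported on A ∩ B. -/
import Mathlib


/-- The monoid of injective self-maps of ω (modelled as ℕ), under composition. -/
def M : Submonoid (Function.End ℕ) where
  carrier := {f | Function.Injective f}
  mul_mem' := fun hf hg => hf.comp hg
  one_mem' := fun _ _ h => h

/-- `x` is supported on `A` if it is fixed by every injection fixing `A` pointwise. -/
def Supported {X : Type*} [MulAction M X] (A : Set ℕ) (x : X) : Prop :=
  ∀ u : M, (∀ a ∈ A, u.1 a = a) → u • x = x

attribute [local instance] Classical.propDecidable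

lemma exists_inj_into {S : Set ℕ} (hS : S.Infinite) :
    ∃ f : ℕ → ℕ, Function.Injective f ∧ ∀ n, f n ∈ S := by
  refine ⟨fun n => (Set.Infinite.natEmbedding S hS n : ℕ), ?_,
    fun n => (Set.Infinite.natEmbedding S hS n).2⟩
  intro a b h
  exact (Set.Infinite.natEmbedding S hS).injective (Subtype.ext h)

lemma exists_inj_pair {S : Set ℕ} (hS : S.Infinite) :
    ∃ f g : ℕ → ℕ, Function.Injective f ∧ Function.Injective g ∧
      (∀ n, f n ∈ S) ∧ (∀ n, g n ∈ S) ∧ ∀ m n, f m ≠ g n := by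
  obtain ⟨e, he, hmem⟩ := exists_inj_into hS
  refine ⟨fun n => e (2*n), fun n => e (2*n+1), ?_, ?_, fun n => hmem _, fun n => hmem _, ?_⟩
  · intro a b h; have := he h; omega
  · intro a b h; have := he h; omega
  · intro m n h; have := he h; omega

lemma inj_ite {P : ℕ → Prop} [DecidablePred P] {f g : ℕ → ℕ}
    (hf : ∀ a, P a → ∀ b, P b → f a = f b → a = b)
    (hg : ∀ a, ¬P a → ∀ b, ¬P b → g a = g b → a = b)
    (hfg : ∀ a, P a → ∀ b, ¬P b → f a ≠ g b) :
    Function.Injective (fun n => if P n then f n else g n) := by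
  intro a b h
  simp only at h
  by_cases ha : P a <;> by_cases hb : P b
  · rw [if_pos ha, if_pos hb] at h; exact hf a ha b hb h
  · rw [if_pos ha, if_neg hb] at h; exact absurd h (hfg a ha b hb)
  · rw [if_neg ha, if_pos hb] at h; exact absurd h.symm (hfg b hb a ha)
  · rw [if_neg ha, if_neg hb] at h; exact hg a ha b hb h

lemma lemB {X : Type*} [MulAction M X] {A : Set ℕ} {x : X} (hx : Supported A x)
    (s t : M) (hst : Set.EqOn (s.1 : ℕ → ℕ) (t.1 : ℕ → ℕ) A)
    (hinf : (((s.1 : ℕ → ℕ) '' Aᶜ) ∩ ((t.1 : ℕ → ℕ) '' Aᶜ)).Infinite) : s • x = t • x := by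
  have hs : Function.Injective (s.1 : ℕ → ℕ) := s.2
  have ht : Function.Injective (t.1 : ℕ → ℕ) := t.2
  set W : Set ℕ := Aᶜ ∩ ((s.1 : ℕ → ℕ) ⁻¹' ((t.1 : ℕ → ℕ) '' Aᶜ)) with hWdef
  have himg : (s.1 : ℕ → ℕ) '' W = ((s.1 : ℕ → ℕ) '' Aᶜ) ∩ ((t.1 : ℕ → ℕ) '' Aᶜ) := by
    ext y; constructor
    · rintro ⟨n, ⟨hn1, hn2⟩, rfl⟩; exact ⟨⟨n, hn1, rfl⟩, hn2⟩
    · rintro ⟨⟨n, hn, rfl⟩, hy⟩; exact ⟨n, ⟨hn, hy⟩, rfl⟩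
  have hWinf : W.Infinite := Set.Infinite.of_image _ (himg ▸ hinf)
  obtain ⟨e, he, heW⟩ := exists_inj_into hWinf
  have heA : ∀ n, e n ∉ A := fun n => (heW n).1
  have heT : ∀ n, ∃ m, m ∉ A ∧ (t.1 : ℕ → ℕ) m = (s.1 : ℕ → ℕ) (e n) := by
    intro n
    obtain ⟨m, hm, hm2⟩ := (heW n).2
    exact ⟨m, hm, hm2⟩
  choose g hg1 hg2 using heT
  have hwinj : Function.Injective (fun n => if n ∈ A then n else e n) := by
    refine inj_ite (fun a ha b hb h => h) (fun a ha b hb h => he h) ?_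
    intro a ha b hb h
    exact heA b (h ▸ ha)
  have hw'inj : Function.Injective (fun n => if n ∈ A then n else g n) := by
    refine inj_ite (fun a ha b hb h => h) ?_ ?_
    · intro a ha b hb h
      have : (s.1 : ℕ → ℕ) (e a) = (s.1 : ℕ → ℕ) (e b) := by
        rw [← hg2 a, ← hg2 b, h]
      exact he (hs this)
    · intro a ha b hb h
      exact hg1 b (h ▸ ha)
  let wM : M := ⟨(fun n => if n ∈ A then n else e n : Function.End ℕ), hwinj⟩
  let w'M : M := ⟨(fun n => if n ∈ A then n else g n : Function.End ℕ), hw'inj⟩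
  have hwx : wM • x = x := hx wM (fun a ha => if_pos ha)
  have hw'x : w'M • x = x := hx w'M (fun a ha => if_pos ha)
  have hkey : s * wM = t * w'M := by
    apply Subtype.ext
    funext n
    show (s.1 : ℕ → ℕ) (if n ∈ A then n else e n) = (t.1 : ℕ → ℕ) (if n ∈ A then n else g n)
    by_cases hn : n ∈ A
    · rw [if_pos hn, if_pos hn]; exact hst hn
    · rw [if_neg hn, if_neg hn]; exact (hg2 n).symm
  calc s • x = s • (wM • x) := by rw [hwx]
    _ = (s * wM) • x := (mul_smul _ _ _).symm
    _ = (t * w'M) • x := by rw [hkey]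
    _ = t • (w'M • x) := mul_smul _ _ _
    _ = t • x := by rw [hw'x]

lemma lemA {X : Type*} [MulAction M X] {A : Set ℕ} (hA : (Aᶜ : Set ℕ).Infinite)
    {x : X} (hx : Supported A x) (s t : M)
    (hst : Set.EqOn (s.1 : ℕ → ℕ) (t.1 : ℕ → ℕ) A) : s • x = t • x := by
  have hs : Function.Injective (s.1 : ℕ → ℕ) := s.2
  have ht : Function.Injective (t.1 : ℕ → ℕ) := t.2
  by_cases hcase : (((s.1 : ℕ → ℕ) '' Aᶜ) ∩ ((t.1 : ℕ → ℕ) '' Aᶜ)).Infinite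
  · exact lemB hx s t hst hcase
  -- finite intersection case
  have hsAc : (((s.1 : ℕ → ℕ)) '' Aᶜ).Infinite := hA.image (hs.injOn)
  have htAc : (((t.1 : ℕ → ℕ)) '' Aᶜ).Infinite := hA.image (ht.injOn)
  have hfin := Set.not_infinite.mp hcase
  have h1 : ((((s.1 : ℕ → ℕ)) '' Aᶜ) \ Set.range (t.1 : ℕ → ℕ)).Infinite := by
    rw [Set.not_infinite] at hcase
    by_contra h1f
    rw [Set.not_infinite] at h1f
    refine hsAc ((hcase.union h1f).subset ?_)
    rintro y ⟨n, hn, rfl⟩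
    by_cases hy : (s.1 : ℕ → ℕ) n ∈ Set.range (t.1 : ℕ → ℕ)
    · obtain ⟨m, hm⟩ := hy
      left
      refine ⟨⟨n, hn, rfl⟩, ⟨m, ?_, hm⟩⟩
      intro hmA
      have : (s.1 : ℕ → ℕ) m = (s.1 : ℕ → ℕ) n := (hst hmA).trans hm
      exact hn (hs this ▸ hmA)
    · exact Or.inr ⟨⟨n, hn, rfl⟩, hy⟩
  have h2 : ((((t.1 : ℕ → ℕ)) '' Aᶜ) \ Set.range (s.1 : ℕ → ℕ)).Infinite := by
    rw [Set.not_infinite] at hcase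
    by_contra h2f
    rw [Set.not_infinite] at h2f
    refine htAc ((hcase.union h2f).subset ?_)
    rintro y ⟨n, hn, rfl⟩
    by_cases hy : (t.1 : ℕ → ℕ) n ∈ Set.range (s.1 : ℕ → ℕ)
    · obtain ⟨m, hm⟩ := hy
      left
      refine ⟨⟨m, ?_, hm⟩, ⟨n, hn, rfl⟩⟩
      intro hmA
      have : (t.1 : ℕ → ℕ) m = (t.1 : ℕ → ℕ) n := (hst hmA).symm.trans hm
      exact hn (ht this ▸ hmA)
    · exact Or.inr ⟨⟨n, hn, rfl⟩, hy⟩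
  obtain ⟨e₁, he₁, he₁m⟩ := exists_inj_into h1
  obtain ⟨e₂, he₂, he₂m⟩ := exists_inj_into h2
  obtain ⟨cf, cg, hcf, hcg, hcfm, hcgm, hcfg⟩ := exists_inj_pair hA
  set C : Set ℕ := Set.range cf with hCdef
  have hs0inj : Function.Injective
      (fun n => if n ∈ A then (s.1 : ℕ → ℕ) n else if n ∈ C then e₁ n else e₂ n) := by
    refine inj_ite (fun a ha b hb h => hs h) ?_ ?_
    · intro a ha b hb h
      by_cases haC : a ∈ C <;> by_cases hbC : b ∈ C
      · rw [if_pos haC, if_pos hbC] at h; exact he₁ h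
      · rw [if_pos haC, if_neg hbC] at h
        obtain ⟨n, _, hne⟩ := (he₁m a).1
        exact absurd ⟨n, hne.trans h⟩ (he₂m b).2
      · rw [if_neg haC, if_pos hbC] at h
        obtain ⟨n, _, hne⟩ := (he₁m b).1
        exact absurd ⟨n, hne.trans h.symm⟩ (he₂m a).2
      · rw [if_neg haC, if_neg hbC] at h; exact he₂ h
    · intro a ha b hb
      by_cases hbC : b ∈ C
      · rw [if_pos hbC]
        intro h
        obtain ⟨n, hn, hne⟩ := (he₁m b).1
        exact hn (hs (h.trans hne.symm) ▸ ha)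
      · rw [if_neg hbC]
        intro h
        exact (he₂m b).2 ⟨a, h⟩
  let s₀ : M := ⟨(fun n => if n ∈ A then (s.1 : ℕ → ℕ) n else if n ∈ C then e₁ n else e₂ n :
      Function.End ℕ), hs0inj⟩
  have hs₀A : ∀ a ∈ A, (s₀.1 : ℕ → ℕ) a = (s.1 : ℕ → ℕ) a := fun a ha => if_pos ha
  have step1 : s • x = s₀ • x := by
    refine lemB hx s s₀ (fun a ha => (hs₀A a ha).symm) ?_
    have hsub : e₁ '' C ⊆ (((s.1 : ℕ → ℕ)) '' Aᶜ) ∩ (((s₀.1 : ℕ → ℕ)) '' Aᶜ) := by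
      rintro y ⟨n, hnC, rfl⟩
      obtain ⟨k, rfl⟩ := hnC
      have hnA : cf k ∉ A := hcfm k
      refine ⟨(he₁m (cf k)).1, ⟨cf k, hnA, ?_⟩⟩
      show (if cf k ∈ A then _ else if cf k ∈ C then e₁ (cf k) else _) = e₁ (cf k)
      rw [if_neg hnA]
      exact if_pos ⟨k, rfl⟩
    have hCinf : C.Infinite := Set.infinite_range_of_injective hcf
    exact (hCinf.image he₁.injOn).mono hsub
  have step2 : t • x = s₀ • x := by
    refine lemB hx t s₀ (fun a ha => ((hst ha).symm.trans (hs₀A a ha).symm)) ?_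
    have hsub : e₂ '' (Set.range cg) ⊆ (((t.1 : ℕ → ℕ)) '' Aᶜ) ∩ (((s₀.1 : ℕ → ℕ)) '' Aᶜ) := by
      rintro y ⟨n, hnC, rfl⟩
      obtain ⟨k, rfl⟩ := hnC
      have hnA : cg k ∉ A := hcgm k
      have hnC : cg k ∉ C := by rintro ⟨m, hm⟩; exact hcfg m k hm
      refine ⟨(he₂m (cg k)).1, ⟨cg k, hnA, ?_⟩⟩
      show (if cg k ∈ A then _ else if cg k ∈ C then _ else e₂ (cg k)) = e₂ (cg k)
      rw [if_neg hnA]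
      exact if_neg hnC
    have hCinf : (Set.range cg).Infinite := Set.infinite_range_of_injective hcg
    exact (hCinf.image he₂.injOn).mono hsub
  exact step1.trans step2.symm

theorem stmt_3 {X : Type*} [MulAction M X] (A B : Set ℕ)
    (hA : (Aᶜ : Set ℕ).Infinite) (hB : (Bᶜ : Set ℕ).Infinite)
    (x : X) (hxA : Supported A x) (hxB : Supported B x) :
    Supported (A ∩ B) x := by
  intro u hu
  have huinj : Function.Injective (u.1 : ℕ → ℕ) := u.2
  have hK : (((u.1 : ℕ → ℕ) '' A)ᶜ : Set ℕ).Infinite := by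
    have hsub : (u.1 : ℕ → ℕ) '' Aᶜ ⊆ ((u.1 : ℕ → ℕ) '' A)ᶜ := by
      rintro y ⟨n, hn, rfl⟩ ⟨m, hm, hme⟩
      exact hn (huinj hme ▸ hm)
    exact (hA.image huinj.injOn).mono hsub
  obtain ⟨h, c, hhinj, hcinj, hhmem, hcmem, hhc⟩ :
      ∃ h c : ℕ → ℕ, Function.Injective h ∧ Function.Injective c ∧
        (∀ n, h n ∈ ((u.1 : ℕ → ℕ) '' A)ᶜ) ∧ (∀ n, c n ∈ Bᶜ) ∧ ∀ m n, h m ≠ c n := by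
    by_cases hc1 : ((((u.1 : ℕ → ℕ) '' A)ᶜ ∩ B) : Set ℕ).Infinite
    · obtain ⟨h, hh, hhm⟩ := exists_inj_into hc1
      obtain ⟨c, hc, hcm⟩ := exists_inj_into hB
      exact ⟨h, c, hh, hc, fun n => (hhm n).1, hcm, fun m n hmn => (hcm n) (hmn ▸ (hhm m).2)⟩
    · have hinf2 : ((((u.1 : ℕ → ℕ) '' A)ᶜ ∩ Bᶜ) : Set ℕ).Infinite := by
        by_contra hfin
        rw [Set.not_infinite] at hfin
        rw [Set.not_infinite] at hc1
        refine hK ((hc1.union hfin).subset ?_)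
        intro y hy
        by_cases hyB : y ∈ B
        · exact Or.inl ⟨hy, hyB⟩
        · exact Or.inr ⟨hy, hyB⟩
      obtain ⟨f, g, hf, hg, hfm, hgm, hfg⟩ := exists_inj_pair hinf2
      exact ⟨f, g, hf, hg, fun n => (hfm n).1, fun n => (hgm n).2, hfg⟩
  -- the four maps
  have hu1inj : Function.Injective (fun n => if n ∈ A then (u.1 : ℕ → ℕ) n else h n) := by
    refine inj_ite (fun a ha b hb hab => huinj hab) (fun a ha b hb hab => hhinj hab) ?_
    intro a ha b hb hab
    exact (hhmem b) (hab ▸ ⟨a, ha, rfl⟩)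
  let U1 : M := ⟨(fun n => if n ∈ A then (u.1 : ℕ → ℕ) n else h n : Function.End ℕ), hu1inj⟩
  have hU1c : ∀ b ∈ B, ∀ k, (U1.1 : ℕ → ℕ) b ≠ c k := by
    intro b hb k
    show (if b ∈ A then (u.1 : ℕ → ℕ) b else h b) ≠ c k
    by_cases hbA : b ∈ A
    · rw [if_pos hbA, hu b ⟨hbA, hb⟩]
      intro hk
      exact (hcmem k) (hk ▸ hb)
    · rw [if_neg hbA]
      exact hhc b k
  have hcBc : ∀ k, c k ∉ B := fun k => hcmem k
  have hu2inj : Function.Injective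
      (fun n => if n ∈ B then (U1.1 : ℕ → ℕ) n else if n ∈ A then c (2*n) else c (2*n+1)) := by
    refine inj_ite (fun a ha b hb hab => hu1inj hab) ?_ ?_
    · intro a ha b hb hab
      by_cases haA : a ∈ A <;> by_cases hbA : b ∈ A
      · rw [if_pos haA, if_pos hbA] at hab; have := hcinj hab; omega
      · rw [if_pos haA, if_neg hbA] at hab; have := hcinj hab; omega
      · rw [if_neg haA, if_pos hbA] at hab; have := hcinj hab; omega
      · rw [if_neg haA, if_neg hbA] at hab; have := hcinj hab; omega
    · intro a ha b hb
      by_cases hbA : b ∈ A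
      · rw [if_pos hbA]; exact hU1c a ha (2*b)
      · rw [if_neg hbA]; exact hU1c a ha (2*b+1)
  let U2 : M := ⟨(fun n => if n ∈ B then (U1.1 : ℕ → ℕ) n
      else if n ∈ A then c (2*n) else c (2*n+1) : Function.End ℕ), hu2inj⟩
  have hu3inj : Function.Injective
      (fun n => if n ∈ B then n else if n ∈ A then c (2*n) else c (2*n+1)) := by
    refine inj_ite (fun a ha b hb hab => hab) ?_ ?_
    · intro a ha b hb hab
      by_cases haA : a ∈ A <;> by_cases hbA : b ∈ A
      · rw [if_pos haA, if_pos hbA] at hab; have := hcinj hab; omega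
      · rw [if_pos haA, if_neg hbA] at hab; have := hcinj hab; omega
      · rw [if_neg haA, if_pos hbA] at hab; have := hcinj hab; omega
      · rw [if_neg haA, if_neg hbA] at hab; have := hcinj hab; omega
    · intro a ha b hb
      by_cases hbA : b ∈ A
      · rw [if_pos hbA]; intro hk; exact (hcBc (2*b)) (hk ▸ ha)
      · rw [if_neg hbA]; intro hk; exact (hcBc (2*b+1)) (hk ▸ ha)
  let U3 : M := ⟨(fun n => if n ∈ B then n
      else if n ∈ A then c (2*n) else c (2*n+1) : Function.End ℕ), hu3inj⟩
  have step1 : u • x = U1 • x :=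
    lemA hA hxA u U1 (fun a ha => (if_pos ha).symm)
  have step2 : U1 • x = U2 • x :=
    lemA hB hxB U1 U2 (fun b hb => (if_pos hb).symm)
  have step3 : U2 • x = U3 • x := by
    refine lemA hA hxA U2 U3 ?_
    intro a ha
    show (if a ∈ B then (U1.1 : ℕ → ℕ) a else if a ∈ A then c (2*a) else c (2*a+1))
        = (if a ∈ B then a else if a ∈ A then c (2*a) else c (2*a+1))
    by_cases hb : a ∈ B
    · rw [if_pos hb, if_pos hb]
      show (if a ∈ A then (u.1 : ℕ → ℕ) a else h a) = a
      rw [if_pos ha]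
      exact hu a ⟨ha, hb⟩
    · rw [if_neg hb, if_neg hb]
  have step4 : U3 • x = x := by
    have : U3 • x = (1 : M) • x := by
      refine lemA hB hxB U3 1 ?_
      intro b hb
      show (if b ∈ B then b else if b ∈ A then c (2*b) else c (2*b+1)) = b
      rw [if_pos hb]
    rw [this, one_smul]
  exact ((step1.trans step2).trans step3).trans step4
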